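/- Let Δ, L0, L1 > 0 with Δ·L1² ≥ L0, and let f: ℝ → ℝ be any continuously differentiable function that is bounded below with f(0) - inf f ≤ Δ and satisfies the (L0,L1)-smoothness condition |f'(x) - f'(y)| ≤ (L0 + L1|f'(x)|)·|x - y| for all |x - y| ≤ 1/L1. Then for every x with f(x) ≤ f(0), |f'(x)| ≤ C·(L0/L1 + Δ·L1) for some universal constant C. -/

import Mathlib

theorem stmt_19 :
    ∃ C : ℝ, 0 < C ∧
      ∀ (Δ L0 L1 : ℝ) (f : ℝ → ℝ),
        0 < Δ → 0 < L0 → 0 < L1 → L0 ≤ Δ * L1 ^ 2 →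
        ContDiff ℝ 1 f →
        BddBelow (Set.range f) →
        f 0 - ⨅ x, f x ≤ Δ →
        (∀ x y : ℝ, |x - y| ≤ 1 / L1 →
          |deriv f x - deriv f y| ≤ (L0 + L1 * |deriv f x|) * |x - y|) →
        ∀ x : ℝ, f x ≤ f 0 → |deriv f x| ≤ C * (L0 / L1 + Δ * L1) := by
  refine ⟨4, by norm_num, ?_⟩
  intro Δ L0 L1 f hΔ hL0 hL1 _hdeg hf hbdd hgap hsm x hx
  have hdiff : Differentiable ℝ f := hf.differentiable one_ne_zero
  have hcont : Continuous f := hdiff.continuous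
  set g := deriv f x with hg
  set h : ℝ := 1 / (2 * L1) with hhdef
  have hh : (0:ℝ) < h := by rw [hhdef]; positivity
  have hh2 : h * (2 * L1) = 1 := by rw [hhdef]; field_simp
  have hhle : h ≤ 1 / L1 := by
    rw [hhdef, div_le_div_iff₀ (by positivity) hL1]; nlinarith
  have hdec : ∀ y : ℝ, f x - f y ≤ Δ := by
    intro y
    have hinf : (⨅ z, f z) ≤ f y := ciInf_le hbdd y
    linarith [hgap, hx]
  have hgoal : 4 * (L0 / L1 + Δ * L1) = (4 * L0 + 4 * Δ * L1 ^ 2) / L1 := by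
    field_simp
  rcases le_or_gt 0 g with hpos | hneg
  · -- g ≥ 0, step left
    have hab : x - h < x := by linarith
    obtain ⟨c, hc, hceq⟩ := exists_hasDerivAt_eq_slope f (deriv f) hab
      (hcont.continuousOn) (fun y _ => (hdiff y).hasDerivAt)
    have hxc : |x - c| ≤ 1 / L1 := by
      rw [abs_le]
      constructor <;> linarith [hc.1, hc.2, hhle, hh]
    have hsm' := hsm x c hxc
    have habs : |x - c| ≤ h := by
      rw [abs_le]; constructor <;> linarith [hc.1, hc.2, hh]
    have hlb : g - (L0 + L1 * g) * h ≤ deriv f c := by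
      have h1 : g - deriv f c ≤ (L0 + L1 * g) * |x - c| := by
        calc g - deriv f c ≤ |deriv f x - deriv f c| := le_abs_self _
        _ ≤ (L0 + L1 * |deriv f x|) * |x - c| := hsm'
        _ = (L0 + L1 * g) * |x - c| := by rw [← hg, abs_of_nonneg hpos]
      have h2 : (L0 + L1 * g) * |x - c| ≤ (L0 + L1 * g) * h :=
        mul_le_mul_of_nonneg_left habs (by nlinarith)
      linarith
    have hdecx : f x - f (x - h) = deriv f c * h := by
      rw [hceq]
      have : x - (x - h) = h := by ring
      rw [this]
      field_simp
    have hkey : (g - (L0 + L1 * g) * h) * h ≤ Δ := by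
      have hm := mul_le_mul_of_nonneg_right hlb (le_of_lt hh)
      linarith [hdec (x - h)]
    -- multiply hkey by (2*L1)^2
    have hkey2 : g * (2 * L1) - (L0 + L1 * g) ≤ Δ * (2 * L1) ^ 2 := by
      have hm := mul_le_mul_of_nonneg_right hkey (by positivity : (0:ℝ) ≤ (2 * L1) ^ 2)
      have hA : (g - (L0 + L1 * g) * h) * h * (2 * L1) ^ 2
          = g * (h * (2 * L1)) * (2 * L1) - (L0 + L1 * g) * ((h * (2 * L1)) * (h * (2 * L1))) := by
        ring
      rw [hA, hh2] at hm
      linarith [hm]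
    rw [abs_of_nonneg hpos, hgoal, le_div_iff₀ hL1]
    nlinarith [hkey2, hL0.le]
  · -- g < 0, step right
    have hab : x < x + h := by linarith
    obtain ⟨c, hc, hceq⟩ := exists_hasDerivAt_eq_slope f (deriv f) hab
      (hcont.continuousOn) (fun y _ => (hdiff y).hasDerivAt)
    have hxc : |x - c| ≤ 1 / L1 := by
      rw [abs_le]
      constructor <;> linarith [hc.1, hc.2, hhle, hh]
    have hsm' := hsm x c hxc
    have habs : |x - c| ≤ h := by
      rw [abs_le]; constructor <;> linarith [hc.1, hc.2, hh]
    have hub : deriv f c ≤ g + (L0 + L1 * (-g)) * h := by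
      have h1 : deriv f c - g ≤ (L0 + L1 * (-g)) * |x - c| := by
        calc deriv f c - g ≤ |deriv f x - deriv f c| := by
              rw [abs_sub_comm]; exact le_abs_self _
        _ ≤ (L0 + L1 * |deriv f x|) * |x - c| := hsm'
        _ = (L0 + L1 * (-g)) * |x - c| := by rw [← hg, abs_of_neg hneg]
      have h2 : (L0 + L1 * (-g)) * |x - c| ≤ (L0 + L1 * (-g)) * h :=
        mul_le_mul_of_nonneg_left habs (by nlinarith)
      linarith
    have hdecx : f x - f (x + h) = -(deriv f c * h) := by
      rw [hceq]
      have : x + h - x = h := by ring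
      rw [this]
      field_simp; ring
    have hkey : (-g - (L0 + L1 * (-g)) * h) * h ≤ Δ := by
      have hm := mul_le_mul_of_nonneg_right hub (le_of_lt hh)
      have hB : (-g - (L0 + L1 * (-g)) * h) * h = -((g + (L0 + L1 * (-g)) * h) * h) := by ring
      linarith [hdec (x + h)]
    have hkey2 : -g * (2 * L1) - (L0 + L1 * (-g)) ≤ Δ * (2 * L1) ^ 2 := by
      have hm := mul_le_mul_of_nonneg_right hkey (by positivity : (0:ℝ) ≤ (2 * L1) ^ 2)
      have hA : (-g - (L0 + L1 * (-g)) * h) * h * (2 * L1) ^ 2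
          = -g * (h * (2 * L1)) * (2 * L1)
            - (L0 + L1 * (-g)) * ((h * (2 * L1)) * (h * (2 * L1))) := by
        ring
      rw [hA, hh2] at hm
      linarith [hm]
    rw [abs_of_neg hneg, hgoal, le_div_iff₀ hL1]
    nlinarith [hkey2, hL0.le]
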